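/- The language SQUARES (the set of perfect squares) cannot be represented in each initial segment by a set of the form {x ∈ ℤ : ∃ y ∈ ℤ^n, Φ_r(x,y)} where Φ_r is a Boolean combination of linear inequalities defining a union of at most poly(r) convex polyhedra, because: for every n, k, m there is a bound B(n,k,m) = k^{n+1}·m such that any such set of cardinality exceeding B contains a non-trivial 4-term AP, while the number of squares below 2^r exceeds any polynomial in r for large r and squares contain no non-trivial 4-term AP. -/

import Mathlib

lemma int_coprime_of_forall_dvd {p q : ℤ} (h : ∀ z : ℤ, z ∣ p → z ∣ q → IsUnit z) :
    IsCoprime p q := by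
  rw [Int.isCoprime_iff_gcd_eq_one]
  have h1 := h (Int.gcd p q) (Int.gcd_dvd_left p q) (Int.gcd_dvd_right p q)
  rw [Int.isUnit_iff] at h1
  rcases h1 with h1 | h1
  · exact_mod_cast h1
  · exfalso; have : (0:ℤ) ≤ (Int.gcd p q : ℤ) := Int.natCast_nonneg _
    omega

lemma int_three_dvd_sq_add_sq {a b : ℤ} (h : (3:ℤ) ∣ a^2 + b^2) : (3:ℤ) ∣ a ∧ (3:ℤ) ∣ b := by
  have h3 : ((a : ZMod 3)^2 + (b : ZMod 3)^2) = 0 := by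
    have := (ZMod.intCast_zmod_eq_zero_iff_dvd (a^2+b^2) 3).2 (by exact_mod_cast h)
    push_cast at this
    exact this
  have key : ∀ x y : ZMod 3, x^2 + y^2 = 0 → x = 0 ∧ y = 0 := by decide
  have hk := key _ _ h3
  constructor
  · have := (ZMod.intCast_zmod_eq_zero_iff_dvd a 3).1 hk.1; exact_mod_cast this
  · have := (ZMod.intCast_zmod_eq_zero_iff_dvd b 3).1 hk.2; exact_mod_cast this

lemma pos_sq_of_coprime {a b c : ℤ} (h : IsCoprime a b) (heq : a * b = c^2) (ha : 0 < a) :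
    ∃ r : ℤ, 0 < r ∧ a = r^2 := by
  obtain ⟨a0, h0 | h0⟩ := Int.sq_of_isCoprime h heq
  · refine ⟨|a0|, ?_, by rw [sq_abs]; exact h0⟩
    rcases eq_or_ne a0 0 with rfl | hne
    · simp at h0; omega
    · exact abs_pos.2 hne
  · exfalso; nlinarith [sq_nonneg a0]

lemma isCoprime_two_of_odd {z : ℤ} (h : Odd z) : IsCoprime z 2 := by
  rw [Int.isCoprime_iff_gcd_eq_one]
  have hd : Int.gcd z 2 ∣ 2 := by
    have h2 := Int.gcd_dvd_right (a := z) (b := 2)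
    exact_mod_cast h2
  rcases (Nat.prime_two).eq_one_or_self_of_dvd _ hd with h1 | h1
  · exact h1
  · exfalso
    have h2' : (2:ℤ) ∣ z := by
      have := Int.gcd_dvd_left (a := z) (b := 2)
      rw [h1] at this; exact_mod_cast this
    rw [Int.odd_iff] at h; omega

lemma isCoprime_three_of_not_dvd {z : ℤ} (h : ¬ (3:ℤ) ∣ z) : IsCoprime z 3 := by
  rw [Int.isCoprime_iff_gcd_eq_one]
  have hd : Int.gcd z 3 ∣ 3 := by
    have h2 := Int.gcd_dvd_right (a := z) (b := 3)
    exact_mod_cast h2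
  rcases (Nat.prime_three).eq_one_or_self_of_dvd _ hd with h1 | h1
  · exact h1
  · exfalso
    apply h
    have := Int.gcd_dvd_left (a := z) (b := 3)
    rw [h1] at this; exact_mod_cast this


lemma odd_of_dvd_odd {z w : ℤ} (h : z ∣ w) (hw : Odd w) : Odd z := by
  rcases Int.even_or_odd z with he | ho
  · exfalso
    have h2 : (2:ℤ) ∣ w := dvd_trans he.two_dvd h
    rw [Int.odd_iff] at hw
    omega
  · exact ho

lemma dvd_of_odd_dvd_two_mul {z w : ℤ} (hz : Odd z) (h : z ∣ 2 * w) : z ∣ w :=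
  (isCoprime_two_of_odd hz).dvd_of_dvd_mul_right (by rwa [mul_comm] at h)

lemma dvd_of_odd_dvd_four_mul {z w : ℤ} (hz : Odd z) (h : z ∣ 4 * w) : z ∣ w := by
  have c4 : IsCoprime z 4 := by
    have := (isCoprime_two_of_odd hz).pow_right (n := 2)
    norm_num at this; exact this
  exact c4.dvd_of_dvd_mul_right (by rwa [mul_comm] at h)

lemma stage2' (b S T : ℤ) (hS : 0 < S) (hT : 0 < T) (hTS : T < S)
    (hco : IsCoprime S T) (hodd : Odd (S+T)) (h3 : ¬ (3:ℤ) ∣ T) (hb : b ≠ 0)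
    (heq : b^2 = (T^2 - S^2) * (T^2 - 9*S^2)) : False := by
  set F1 := S - T with hF1
  set F2 := S + T with hF2
  set F3 := 3*S - T with hF3
  set F4 := 3*S + T with hF4
  have hprod : F1 * (F2 * (F3 * F4)) = b^2 := by rw [heq]; ring
  have hp1 : 0 < F1 := by omega
  have hp2 : 0 < F2 := by omega
  have hp3 : 0 < F3 := by omega
  have hp4 : 0 < F4 := by omega
  have ho1 : Odd F1 := by rw [Int.odd_iff] at *; omega
  have ho2 : Odd F2 := hodd
  have ho3 : Odd F3 := by rw [Int.odd_iff] at *; omega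
  have ho4 : Odd F4 := by rw [Int.odd_iff] at *; omega
  -- pairwise coprimality
  have c12 : IsCoprime F1 F2 := by
    apply int_coprime_of_forall_dvd; intro z h1 h2
    have hzo : Odd z := odd_of_dvd_odd h1 ho1
    have hzS : z ∣ S := dvd_of_odd_dvd_two_mul hzo (by have := dvd_add h1 h2; convert this using 1; rfl; ring)
    have hzT : z ∣ T := dvd_of_odd_dvd_two_mul hzo (by have := dvd_sub h2 h1; convert this using 1; rfl; ring)
    exact hco.isUnit_of_dvd' hzS hzT
  have c13 : IsCoprime F1 F3 := by
    apply int_coprime_of_forall_dvd; intro z h1 h2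
    have hzo : Odd z := odd_of_dvd_odd h1 ho1
    have hzS : z ∣ S := dvd_of_odd_dvd_two_mul hzo (by have := dvd_sub h2 h1; convert this using 1; rfl; ring)
    have hzT : z ∣ T := by have := dvd_sub hzS h1; convert this using 1; rfl; ring
    exact hco.isUnit_of_dvd' hzS hzT
  have c14 : IsCoprime F1 F4 := by
    apply int_coprime_of_forall_dvd; intro z h1 h2
    have hzo : Odd z := odd_of_dvd_odd h1 ho1
    have hzS : z ∣ S := dvd_of_odd_dvd_four_mul hzo (by have := dvd_add h1 h2; convert this using 1; rfl; ring)
    have hzT : z ∣ T := by have := dvd_sub hzS h1; convert this using 1; rfl; ring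
    exact hco.isUnit_of_dvd' hzS hzT
  have c23 : IsCoprime F2 F3 := by
    apply int_coprime_of_forall_dvd; intro z h1 h2
    have hzo : Odd z := odd_of_dvd_odd h1 ho2
    have hzS : z ∣ S := dvd_of_odd_dvd_four_mul hzo (by have := dvd_add h1 h2; convert this using 1; rfl; ring)
    have hzT : z ∣ T := by have := dvd_sub h1 hzS; convert this using 1; rfl; ring
    exact hco.isUnit_of_dvd' hzS hzT
  have c24 : IsCoprime F2 F4 := by
    apply int_coprime_of_forall_dvd; intro z h1 h2
    have hzo : Odd z := odd_of_dvd_odd h1 ho2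
    have hzS : z ∣ S := dvd_of_odd_dvd_two_mul hzo (by have := dvd_sub h2 h1; convert this using 1; rfl; ring)
    have hzT : z ∣ T := by have := dvd_sub h1 hzS; convert this using 1; rfl; ring
    exact hco.isUnit_of_dvd' hzS hzT
  have c34 : IsCoprime F3 F4 := by
    apply int_coprime_of_forall_dvd; intro z h1 h2
    have hzo : Odd z := odd_of_dvd_odd h1 ho3
    have hzT : z ∣ T := dvd_of_odd_dvd_two_mul hzo (by have := dvd_sub h2 h1; convert this using 1; rfl; ring)
    have hz3S : z ∣ 3*S := by
      have h6 : z ∣ 2*(3*S) := by have := dvd_add h1 h2; convert this using 1; rfl; ring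
      exact dvd_of_odd_dvd_two_mul hzo h6
    by_cases hz3 : (3:ℤ) ∣ z
    · exact absurd (hz3.trans hzT) h3
    · have hzS : z ∣ S := (isCoprime_three_of_not_dvd hz3).dvd_of_dvd_mul_left hz3S
      exact hco.isUnit_of_dvd' hzS hzT
  -- extract squares
  obtain ⟨γ, hγpos, hγ⟩ := pos_sq_of_coprime (c34.mul_right (c13.symm.mul_right c23.symm))
    (show F3 * (F4 * (F1 * F2)) = b^2 by linear_combination hprod) hp3
  obtain ⟨δ, hδpos, hδ⟩ := pos_sq_of_coprime (c34.symm.mul_right (c14.symm.mul_right c24.symm))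
    (show F4 * (F3 * (F1 * F2)) = b^2 by linear_combination hprod) hp4
  -- mod 3 contradiction
  have hsum : γ^2 + δ^2 = 6*S := by
    rw [← hγ, ← hδ]; omega
  have h3d : (3:ℤ) ∣ γ^2 + δ^2 := ⟨2*S, by omega⟩
  obtain ⟨h3γ, h3δ⟩ := int_three_dvd_sq_add_sq h3d
  obtain ⟨γ', hγ'⟩ := h3γ
  obtain ⟨δ', hδ'⟩ := h3δ
  have h2S : 3 * (γ'^2 + δ'^2) = 2*S := by
    have : 9*(γ'^2 + δ'^2) = 6*S := by rw [← hsum, hγ', hδ']; ring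
    omega
  have h3S : (3:ℤ) ∣ S := by
    rcases (Int.prime_three).dvd_mul.1 (⟨γ'^2+δ'^2, by omega⟩ : (3:ℤ) ∣ 2*S) with h | h
    · norm_num at h
    · exact h
  apply h3
  have : T = 3*S - γ^2 := by omega
  obtain ⟨S', hS'⟩ := h3S
  exact ⟨S' * 3 - 3*γ'^2, by rw [this, hγ', hS']; ring⟩


lemma stage2 (b S T : ℤ) (hS : 0 < S) (hT3 : 3*S < T)
    (hco : IsCoprime S T) (hodd : Odd (S+T)) (h3 : ¬ (3:ℤ) ∣ T) (hb : b ≠ 0)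
    (heq : b^2 = (T^2 - S^2) * (T^2 - 9*S^2)) :
    ∃ γ α β δ : ℤ, 0 < γ ∧ 0 < α ∧ 0 < β ∧ 0 < δ ∧
      γ^2 = T - 3*S ∧ α^2 = γ^2 + 2*S ∧ β^2 = γ^2 + 4*S ∧ δ^2 = γ^2 + 6*S := by
  set F1 := T - 3*S with hF1
  set F2 := T - S with hF2
  set F3 := T + S with hF3
  set F4 := T + 3*S with hF4
  have hprod : F1 * (F2 * (F3 * F4)) = b^2 := by rw [heq]; ring
  have hp1 : 0 < F1 := by omega
  have hp2 : 0 < F2 := by omega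
  have hp3 : 0 < F3 := by omega
  have hp4 : 0 < F4 := by omega
  have ho3 : Odd F3 := by rw [hF3, add_comm]; exact hodd
  have ho1 : Odd F1 := by rw [Int.odd_iff] at *; omega
  have ho2 : Odd F2 := by rw [Int.odd_iff] at *; omega
  have ho4 : Odd F4 := by rw [Int.odd_iff] at *; omega
  have c12 : IsCoprime F1 F2 := by
    apply int_coprime_of_forall_dvd; intro z h1 h2
    have hzo : Odd z := odd_of_dvd_odd h1 ho1
    have hzS : z ∣ S := dvd_of_odd_dvd_two_mul hzo (by have := dvd_sub h2 h1; convert this using 1; rfl; ring)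
    have hzT : z ∣ T := by have := dvd_add h2 hzS; convert this using 1; rfl; ring
    exact hco.isUnit_of_dvd' hzS hzT
  have c13 : IsCoprime F1 F3 := by
    apply int_coprime_of_forall_dvd; intro z h1 h2
    have hzo : Odd z := odd_of_dvd_odd h1 ho1
    have hzS : z ∣ S := dvd_of_odd_dvd_four_mul hzo (by have := dvd_sub h2 h1; convert this using 1; rfl; ring)
    have hzT : z ∣ T := by have := dvd_sub h2 hzS; convert this using 1; rfl; ring
    exact hco.isUnit_of_dvd' hzS hzT
  have c14 : IsCoprime F1 F4 := by
    apply int_coprime_of_forall_dvd; intro z h1 h2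
    have hzo : Odd z := odd_of_dvd_odd h1 ho1
    have hzT : z ∣ T := dvd_of_odd_dvd_two_mul hzo (by have := dvd_add h1 h2; convert this using 1; rfl; ring)
    have hz3S : z ∣ 3*S := by
      have h6 : z ∣ 2*(3*S) := by have := dvd_sub h2 h1; convert this using 1; rfl; ring
      exact dvd_of_odd_dvd_two_mul hzo h6
    by_cases hz3 : (3:ℤ) ∣ z
    · exact absurd (hz3.trans hzT) h3
    · have hzS : z ∣ S := (isCoprime_three_of_not_dvd hz3).dvd_of_dvd_mul_left hz3S
      exact hco.isUnit_of_dvd' hzS hzT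
  have c23 : IsCoprime F2 F3 := by
    apply int_coprime_of_forall_dvd; intro z h1 h2
    have hzo : Odd z := odd_of_dvd_odd h1 ho2
    have hzS : z ∣ S := dvd_of_odd_dvd_two_mul hzo (by have := dvd_sub h2 h1; convert this using 1; rfl; ring)
    have hzT : z ∣ T := by have := dvd_add h1 hzS; convert this using 1; rfl; ring
    exact hco.isUnit_of_dvd' hzS hzT
  have c24 : IsCoprime F2 F4 := by
    apply int_coprime_of_forall_dvd; intro z h1 h2
    have hzo : Odd z := odd_of_dvd_odd h1 ho2
    have hzS : z ∣ S := dvd_of_odd_dvd_four_mul hzo (by have := dvd_sub h2 h1; convert this using 1; rfl; ring)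
    have hzT : z ∣ T := by have := dvd_add h1 hzS; convert this using 1; rfl; ring
    exact hco.isUnit_of_dvd' hzS hzT
  have c34 : IsCoprime F3 F4 := by
    apply int_coprime_of_forall_dvd; intro z h1 h2
    have hzo : Odd z := odd_of_dvd_odd h1 ho3
    have hzS : z ∣ S := dvd_of_odd_dvd_two_mul hzo (by have := dvd_sub h2 h1; convert this using 1; rfl; ring)
    have hzT : z ∣ T := by have := dvd_sub h1 hzS; convert this using 1; rfl; ring
    exact hco.isUnit_of_dvd' hzS hzT
  obtain ⟨γ, hγpos, hγ⟩ := pos_sq_of_coprime (c12.mul_right (c13.mul_right c14))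
    (show F1 * (F2 * (F3 * F4)) = b^2 from hprod) hp1
  obtain ⟨α, hαpos, hα⟩ := pos_sq_of_coprime (c12.symm.mul_right (c23.mul_right c24))
    (show F2 * (F1 * (F3 * F4)) = b^2 by linear_combination hprod) hp2
  obtain ⟨β, hβpos, hβ⟩ := pos_sq_of_coprime (c13.symm.mul_right (c23.symm.mul_right c34))
    (show F3 * (F1 * (F2 * F4)) = b^2 by linear_combination hprod) hp3
  obtain ⟨δ, hδpos, hδ⟩ := pos_sq_of_coprime (c14.symm.mul_right (c24.symm.mul_right c34.symm))
    (show F4 * (F1 * (F2 * F3)) = b^2 by linear_combination hprod) hp4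
  exact ⟨γ, α, β, δ, hγpos, hαpos, hβpos, hδpos, by omega, by omega, by omega, by omega⟩


lemma odd_of_odd_sq {e : ℤ} (h : Odd (e^2)) : Odd e := by
  rcases Int.even_or_odd e with he | ho
  · exfalso
    obtain ⟨m, hm⟩ := he
    have : Even (e^2) := ⟨2*m^2, by rw [hm]; ring⟩
    rw [Int.even_iff] at this; rw [Int.odd_iff] at h; omega
  · exact ho

set_option maxHeartbeats 2000000 in
lemma no4 : ∀ (N : ℕ) (x1 x2 x3 x4 D : ℤ), 0 ≤ x1 → 0 ≤ x2 → 0 ≤ x3 → 0 ≤ x4 → 0 < D →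
    x2^2 = x1^2 + D → x3^2 = x1^2 + 2*D → x4^2 = x1^2 + 3*D → x4.natAbs ≤ N → False := by
  intro N
  induction N using Nat.strong_induction_on with
  | _ N IH =>
  intro x1 x2 x3 x4 D h1n h2n h3n h4n hD h1 h2 h3 hle
  have hx4pos : 0 < x4 := by
    rcases h4n.lt_or_eq with h | h
    · exact h
    · exfalso; nlinarith [sq_nonneg x1]
  -- Step 1: make x1, x2 coprime
  by_cases hg1 : Int.gcd x1 x2 = 1
  swap
  · -- descend by dividing out the gcd
    have hgd1 : ((Int.gcd x1 x2 : ℕ) : ℤ) ∣ x1 := Int.gcd_dvd_left x1 x2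
    have hgd2 : ((Int.gcd x1 x2 : ℕ) : ℤ) ∣ x2 := Int.gcd_dvd_right x1 x2
    set g : ℤ := ((Int.gcd x1 x2 : ℕ) : ℤ) with hgdef
    have hgne0 : g ≠ 0 := by
      intro h0
      rw [hgdef] at h0
      have h00 : Int.gcd x1 x2 = 0 := by exact_mod_cast h0
      rw [Int.gcd_eq_zero_iff] at h00
      nlinarith [h00.1, h00.2]
    have hgpos : 0 < g := by
      have : (0:ℤ) ≤ g := Int.natCast_nonneg _
      omega
    have hg2 : 2 ≤ g := by
      have hne : g ≠ 1 := by
        rw [hgdef]; intro hh; apply hg1; exact_mod_cast hh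
      omega
    obtain ⟨a1, ha1⟩ := hgd1
    obtain ⟨a2, ha2⟩ := hgd2
    have hDE : D = g^2 * (a2^2 - a1^2) := by
      have hh : (g*a2)^2 = (g*a1)^2 + D := by rw [← ha1, ← ha2]; exact h1
      linear_combination -hh
    set E := a2^2 - a1^2 with hE
    have hEpos : 0 < E := by nlinarith
    have hdvd3 : g^2 ∣ x3^2 := ⟨a1^2 + 2*E, by rw [h2, hDE, ha1]; ring⟩
    have hdvd4 : g^2 ∣ x4^2 := ⟨a1^2 + 3*E, by rw [h3, hDE, ha1]; ring⟩
    have hgx3 : g ∣ x3 := (Int.pow_dvd_pow_iff two_ne_zero).mp hdvd3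
    have hgx4 : g ∣ x4 := (Int.pow_dvd_pow_iff two_ne_zero).mp hdvd4
    obtain ⟨a3, ha3⟩ := hgx3
    obtain ⟨a4, ha4⟩ := hgx4
    have e2 : a2^2 = a1^2 + E := by rw [hE]; ring
    have e3 : a3^2 = a1^2 + 2*E := by
      have : g^2 * a3^2 = g^2 * (a1^2 + 2*E) := by
        rw [← mul_pow, ← ha3, h2, hDE, ha1]; ring
      exact mul_left_cancel₀ (pow_ne_zero 2 hgne0) this
    have e4 : a4^2 = a1^2 + 3*E := by
      have : g^2 * a4^2 = g^2 * (a1^2 + 3*E) := by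
        rw [← mul_pow, ← ha4, h3, hDE, ha1]; ring
      exact mul_left_cancel₀ (pow_ne_zero 2 hgne0) this
    have hn1 : 0 ≤ a1 := nonneg_of_mul_nonneg_right (ha1 ▸ h1n) hgpos
    have hn2 : 0 ≤ a2 := nonneg_of_mul_nonneg_right (ha2 ▸ h2n) hgpos
    have hn3 : 0 ≤ a3 := nonneg_of_mul_nonneg_right (ha3 ▸ h3n) hgpos
    have hn4 : 0 ≤ a4 := nonneg_of_mul_nonneg_right (ha4 ▸ h4n) hgpos
    have ha4small : a4.natAbs < x4.natAbs := by
      have ha4pos : 0 < a4 := by nlinarith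
      have : a4 < x4 := by nlinarith
      omega
    exact IH a4.natAbs (by omega) a1 a2 a3 a4 E hn1 hn2 hn3 hn4 hEpos e2 e3 e4 le_rfl
  -- Now gcd x1 x2 = 1
  have hco : IsCoprime x1 x2 := Int.isCoprime_iff_gcd_eq_one.mpr hg1
  have hx3sq : x3^2 = 2*x2^2 - x1^2 := by linarith
  have hx4sq : x4^2 = 2*x3^2 - x2^2 := by linarith
  -- parity: x1 and x2 are both odd
  have hunit2 : ¬ IsUnit (2:ℤ) := by
    rw [Int.isUnit_iff]; norm_num
  have hunit3 : ¬ IsUnit (3:ℤ) := by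
    rw [Int.isUnit_iff]; norm_num
  have ho1 : Odd x1 := by
    rcases Int.even_or_odd x1 with he1 | ho1
    · exfalso
      rcases Int.even_or_odd x2 with he2 | ho2
      · exact hunit2 (hco.isUnit_of_dvd' he1.two_dvd he2.two_dvd)
      · obtain ⟨k, hk⟩ := he1
        obtain ⟨l, hl⟩ := ho2
        have key : ∀ c l k : ZMod 4, c^2 ≠ 2*(2*l+1)^2 - (k+k)^2 := by decide
        apply key (x3 : ZMod 4) (l : ZMod 4) (k : ZMod 4)
        have h' : x3^2 = 2*(2*l+1)^2 - (k+k)^2 := by rw [← hk, ← hl]; exact hx3sq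
        have := congrArg (fun z : ℤ => (z : ZMod 4)) h'
        push_cast at this
        exact this
    · exact ho1
  have ho2 : Odd x2 := by
    rcases Int.even_or_odd x2 with he2 | ho2
    · exfalso
      obtain ⟨k, hk⟩ := he2
      obtain ⟨l, hl⟩ := ho1
      have key : ∀ c l k : ZMod 8, c^2 ≠ 2*(k+k)^2 - (2*l+1)^2 := by decide
      apply key (x3 : ZMod 8) (l : ZMod 8) (k : ZMod 8)
      have h' : x3^2 = 2*(k+k)^2 - (2*l+1)^2 := by rw [← hk, ← hl]; exact hx3sq
      have := congrArg (fun z : ℤ => (z : ZMod 8)) h'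
      push_cast at this
      exact this
    · exact ho2
  have hD8 : (8:ℤ) ∣ D := by
    obtain ⟨k, hk⟩ := ho1
    obtain ⟨l, hl⟩ := ho2
    have key : ∀ k l : ZMod 8, (2*l+1)^2 - (2*k+1)^2 = 0 := by decide
    have hDval : D = (2*l+1)^2 - (2*k+1)^2 := by rw [← hk, ← hl]; linarith
    have : ((D : ℤ) : ZMod 8) = 0 := by
      rw [hDval]; push_cast; apply key
    have h8 := (ZMod.intCast_zmod_eq_zero_iff_dvd D 8).1 this
    exact_mod_cast h8
  have hDeven : (2:ℤ) ∣ D := dvd_trans ⟨4, by norm_num⟩ hD8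
  have ho3 : Odd x3 := by
    apply odd_of_odd_sq
    obtain ⟨d2, hd2⟩ := hDeven
    obtain ⟨k, hk⟩ := ho1
    exact ⟨2*k^2 + 2*k + 2*d2, by rw [h2, hk, hd2]; ring⟩
  have ho4 : Odd x4 := by
    apply odd_of_odd_sq
    obtain ⟨d2, hd2⟩ := hDeven
    obtain ⟨k, hk⟩ := ho1
    exact ⟨2*k^2 + 2*k + 3*d2, by rw [h3, hk, hd2]; ring⟩
  have hx1pos : 0 < x1 := by
    rcases h1n.lt_or_eq with h | h
    · exact h
    · exfalso; rw [Int.odd_iff] at ho1; omega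
  have hx2pos : 0 < x2 := by
    rcases h2n.lt_or_eq with h | h
    · exact h
    · exfalso; rw [Int.odd_iff] at ho2; omega
  have hx3pos : 0 < x3 := by
    rcases h3n.lt_or_eq with h | h
    · exact h
    · exfalso; rw [Int.odd_iff] at ho3; omega
  have hD8' : 8 ≤ D := Int.le_of_dvd hD (by exact_mod_cast hD8)
  -- pairwise coprimality
  have c21 : IsCoprime x2 x1 := hco.symm
  have c32 : IsCoprime x3 x2 := by
    apply int_coprime_of_forall_dvd; intro z hz3 hz2
    have hzD : z ∣ D := by
      have : x3^2 - x2^2 = D := by linarith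
      rw [← this]; exact dvd_sub (dvd_pow hz3 two_ne_zero) (dvd_pow hz2 two_ne_zero)
    have hzx1 : z ∣ x1^2 := by
      have : x1^2 = x2^2 - D := by linarith
      rw [this]; exact dvd_sub (dvd_pow hz2 two_ne_zero) hzD
    exact (c21.pow_right (n := 2)).isUnit_of_dvd' hz2 hzx1
  have c31 : IsCoprime x3 x1 := by
    apply int_coprime_of_forall_dvd; intro z hz3 hz1
    have hzo : Odd z := odd_of_dvd_odd hz1 ho1
    have hz2D : z ∣ 2*D := by
      have : x3^2 - x1^2 = 2*D := by linarith
      rw [← this]; exact dvd_sub (dvd_pow hz3 two_ne_zero) (dvd_pow hz1 two_ne_zero)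
    have hzD : z ∣ D := dvd_of_odd_dvd_two_mul hzo hz2D
    have hzx2 : z ∣ x2^2 := by
      rw [h1]; exact dvd_add (dvd_pow hz1 two_ne_zero) hzD
    exact (hco.pow_right (n := 2)).isUnit_of_dvd' hz1 hzx2
  have c41 : IsCoprime x4 x1 := by
    apply int_coprime_of_forall_dvd; intro z hz4 hz1
    have hz3D : z ∣ 3*D := by
      have : x4^2 - x1^2 = 3*D := by linarith
      rw [← this]; exact dvd_sub (dvd_pow hz4 two_ne_zero) (dvd_pow hz1 two_ne_zero)
    by_cases hz3 : (3:ℤ) ∣ z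
    · exfalso
      have h31 : (3:ℤ) ∣ x1 := hz3.trans hz1
      have h34 : (3:ℤ) ∣ x4 := hz3.trans hz4
      obtain ⟨m1, hm1⟩ := h31
      obtain ⟨m4, hm4⟩ := h34
      have h3D : (3:ℤ) ∣ D := by
        have h9 : (9:ℤ) ∣ 3*D := by
          have : 3*D = x4^2 - x1^2 := by linarith
          exact ⟨m4^2 - m1^2, by rw [this, hm1, hm4]; ring⟩
        obtain ⟨w, hw⟩ := h9
        exact ⟨w, by linarith⟩
      have h3x2 : (3:ℤ) ∣ x2 := by
        apply Int.prime_three.dvd_of_dvd_pow (n := 2)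
        rw [h1]; exact dvd_add ⟨3*m1^2, by rw [hm1]; ring⟩ h3D
      exact hunit3 (hco.isUnit_of_dvd' ⟨m1, hm1⟩ h3x2)
    · have hzD : z ∣ D := (isCoprime_three_of_not_dvd hz3).dvd_of_dvd_mul_left hz3D
      have hzx2 : z ∣ x2^2 := by
        rw [h1]; exact dvd_add (dvd_pow hz1 two_ne_zero) hzD
      exact (hco.pow_right (n := 2)).isUnit_of_dvd' hz1 hzx2
  have c42 : IsCoprime x4 x2 := by
    apply int_coprime_of_forall_dvd; intro z hz4 hz2
    have hzo : Odd z := odd_of_dvd_odd hz2 ho2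
    have hz2D : z ∣ 2*D := by
      have : x4^2 - x2^2 = 2*D := by linarith
      rw [← this]; exact dvd_sub (dvd_pow hz4 two_ne_zero) (dvd_pow hz2 two_ne_zero)
    have hzD : z ∣ D := dvd_of_odd_dvd_two_mul hzo hz2D
    have hzx1 : z ∣ x1^2 := by
      have : x1^2 = x2^2 - D := by linarith
      rw [this]; exact dvd_sub (dvd_pow hz2 two_ne_zero) hzD
    exact (c21.pow_right (n := 2)).isUnit_of_dvd' hz2 hzx1
  have c43 : IsCoprime x4 x3 := by
    apply int_coprime_of_forall_dvd; intro z hz4 hz3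
    have hzD : z ∣ D := by
      have : x4^2 - x3^2 = D := by linarith
      rw [← this]; exact dvd_sub (dvd_pow hz4 two_ne_zero) (dvd_pow hz3 two_ne_zero)
    have hzx1 : z ∣ x1^2 := by
      have : x1^2 = x3^2 - 2*D := by linarith
      rw [this]; exact dvd_sub (dvd_pow hz3 two_ne_zero) (Dvd.dvd.mul_left hzD 2)
    exact (c31.pow_right (n := 2)).isUnit_of_dvd' hz3 hzx1
  have cBig : IsCoprime (x2*x3) (x1*x4) :=
    IsCoprime.mul_left (c21.mul_right c42.symm) (c31.mul_right c43.symm)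
  -- u, v
  have hoP : Odd (x2*x3) := ho2.mul ho3
  have hoQ : Odd (x1*x4) := ho1.mul ho4
  obtain ⟨u, hu⟩ := hoP.sub_odd hoQ
  obtain ⟨v, hv⟩ := hoP.add_odd hoQ
  have hid : (x2*x3)^2 - (x1*x4)^2 = 2*D^2 := by
    linear_combination x3^2*h1 + (x1^2+D)*h2 - x1^2*h3
  have h4uv : 4*(u*v) = 2*D^2 := by
    have hh : (u+u)*(v+v) = 2*D^2 := by rw [← hu, ← hv]; linear_combination hid
    linear_combination hh
  obtain ⟨w8, hw8⟩ := hD8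
  have hkpos : 0 < 4*w8 := by omega
  have huv : u*v = 2*(4*w8)^2 := by
    have hD2 : D^2 = 64*w8^2 := by rw [hw8]; ring
    linarith
  have hvpos : 0 < v := by
    have hA := mul_pos hx2pos hx3pos
    have hB := mul_pos hx1pos hx4pos
    linarith
  have huvpos : 0 < u*v := by
    have : 0 < (4*w8)^2 := pow_pos hkpos 2
    linarith
  have hupos : 0 < u := by nlinarith [huvpos, hvpos]
  have hsum_uv : u + v = x2*x3 := by linarith
  have hdiff_uv : v - u = x1*x4 := by linarith
  have cuv : IsCoprime u v := by
    apply int_coprime_of_forall_dvd; intro z hzu hzv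
    have h1' : z ∣ x2*x3 := by rw [← hsum_uv]; exact dvd_add hzu hzv
    have h2' : z ∣ x1*x4 := by rw [← hdiff_uv]; exact dvd_sub hzv hzu
    exact cBig.isUnit_of_dvd' h1' h2'
  -- split off the even one of u, v ; get x2*x3 = 2a^2+b^2, D = 2ab
  obtain ⟨a, b, hapos, hbpos, hab, hx23ab, hDab, hob⟩ :
      ∃ a b : ℤ, 0 < a ∧ 0 < b ∧ IsCoprime a b ∧ x2*x3 = 2*a^2 + b^2 ∧ D = 2*(a*b) ∧ Odd b := by
    have hDk : D = 2*(4*w8) := by omega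
    rcases Int.even_or_odd u with hue | huo
    · obtain ⟨u0, hu0⟩ := hue
      have hu0v : u0 * v = (4*w8)^2 := by
        have hh : (u0+u0)*v = 2*(4*w8)^2 := by rw [← hu0]; exact huv
        linarith only [hh]
      have hu0pos : 0 < u0 := by omega
      have cu0v : IsCoprime u0 v := cuv.of_isCoprime_of_dvd_left ⟨2, by omega⟩
      obtain ⟨a, hapos, ha⟩ := pos_sq_of_coprime cu0v hu0v hu0pos
      obtain ⟨b, hbpos, hb⟩ := pos_sq_of_coprime cu0v.symm (show v * u0 = (4*w8)^2 by linear_combination hu0v) hvpos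
      have hk2 : ((4*w8) - a*b)*((4*w8) + a*b) = 0 := by
        have hh : a^2 * b^2 = (4*w8)^2 := by rw [← ha, ← hb]; exact hu0v
        linear_combination -hh
      have habk : a*b = 4*w8 := by
        rcases mul_eq_zero.1 hk2 with h | h
        · linarith only [h]
        · exfalso
          have := mul_pos hapos hbpos
          linarith only [h, this, hkpos]
      have hobb : Odd b := by
        apply odd_of_odd_sq
        rw [← hb]
        have hov : Odd (u + v) := by rw [hsum_uv]; exact hoP
        rw [Int.odd_iff] at hov ⊢
        omega
      exact ⟨a, b, hapos, hbpos,
        (IsCoprime.pow_left_iff two_pos).1 ((IsCoprime.pow_right_iff two_pos).1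
          (by rwa [ha, hb] at cu0v)),
        by linarith only [hsum_uv, hu0, ha, hb], by rw [hDk, ← habk], hobb⟩
    · -- v is even
      have hve : Even v := by
        have hov : Odd (u + v) := by rw [hsum_uv]; exact hoP
        rw [Int.odd_iff] at hov
        rw [Int.even_iff]
        rw [Int.odd_iff] at huo
        omega
      obtain ⟨v0, hv0⟩ := hve
      have hv0u : v0 * u = (4*w8)^2 := by
        have hh : u*(v0+v0) = 2*(4*w8)^2 := by rw [← hv0]; exact huv
        linarith only [hh]
      have hv0pos : 0 < v0 := by omega
      have cv0u : IsCoprime v0 u := (cuv.symm).of_isCoprime_of_dvd_left ⟨2, by omega⟩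
      obtain ⟨a, hapos, ha⟩ := pos_sq_of_coprime cv0u hv0u hv0pos
      obtain ⟨b, hbpos, hb⟩ := pos_sq_of_coprime cv0u.symm (show u * v0 = (4*w8)^2 by linear_combination hv0u) hupos
      have hk2 : ((4*w8) - a*b)*((4*w8) + a*b) = 0 := by
        have hh : a^2 * b^2 = (4*w8)^2 := by rw [← ha, ← hb]; exact hv0u
        linear_combination -hh
      have habk : a*b = 4*w8 := by
        rcases mul_eq_zero.1 hk2 with h | h
        · linarith only [h]
        · exfalso
          have := mul_pos hapos hbpos
          linarith only [h, this, hkpos]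
      have hobb : Odd b := odd_of_odd_sq (by rw [← hb]; exact huo)
      exact ⟨a, b, hapos, hbpos,
        (IsCoprime.pow_left_iff two_pos).1 ((IsCoprime.pow_right_iff two_pos).1
          (by rwa [ha, hb] at cv0u)),
        by linarith only [hsum_uv, hv0, ha, hb], by rw [hDk, ← habk], hobb⟩
  -- e, f with e^2 = a^2+b^2, f^2 = 4a^2+b^2
  have hx3e : x3^2 = x2^2 + D := by linarith only [h1, h2]
  have hGsq : (a^2+b^2) * (4*a^2+b^2) = (x2^2 + a*b)^2 := by
    linear_combination (-(x2*x3 + 2*a^2 + b^2)) * hx23ab + x2^2 * hx3e + x2^2 * hDab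
  have habsq : IsCoprime (a^2) (b^2) := hab.pow
  have ccop : IsCoprime (a^2+b^2) (4*a^2+b^2) := by
    apply int_coprime_of_forall_dvd; intro z hz1 hz2
    have hz3a : z ∣ 3*a^2 := by
      have hh : 3*a^2 = (4*a^2+b^2) - (a^2+b^2) := by ring
      rw [hh]; exact dvd_sub hz2 hz1
    have hz3b : z ∣ 3*b^2 := by
      have hh : 3*b^2 = 4*(a^2+b^2) - (4*a^2+b^2) := by ring
      rw [hh]; exact dvd_sub (Dvd.dvd.mul_left hz1 4) hz2
    by_cases hz3 : (3:ℤ) ∣ z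
    · exfalso
      obtain ⟨h3a, h3b⟩ := int_three_dvd_sq_add_sq (hz3.trans hz1)
      exact hunit3 (hab.isUnit_of_dvd' h3a h3b)
    · have hza : z ∣ a^2 := (isCoprime_three_of_not_dvd hz3).dvd_of_dvd_mul_left hz3a
      have hzb : z ∣ b^2 := (isCoprime_three_of_not_dvd hz3).dvd_of_dvd_mul_left hz3b
      exact habsq.isUnit_of_dvd' hza hzb
  have hpos1 : 0 < a^2 + b^2 := by positivity
  have hpos2 : 0 < 4*a^2 + b^2 := by positivity
  obtain ⟨e, hepos, he⟩ := pos_sq_of_coprime ccop hGsq hpos1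
  obtain ⟨f, hfpos, hf⟩ := pos_sq_of_coprime ccop.symm (show (4*a^2+b^2)*(a^2+b^2) = (x2^2+a*b)^2 by linear_combination hGsq) hpos2
  have hfe : e < f := by nlinarith only [he, hf, hepos, hfpos, mul_pos hapos hapos]
  -- 4 ∣ a
  obtain ⟨a4, ha4⟩ : (4:ℤ) ∣ a := by
    have h4ab : (4:ℤ) ∣ a*b := ⟨w8, by omega⟩
    have hcb4 : IsCoprime (4:ℤ) b := by
      have hh : IsCoprime ((2:ℤ)^2) b := (isCoprime_two_of_odd hob).symm.pow_left
      norm_num at hh; exact hh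
    exact hcb4.dvd_of_dvd_mul_right h4ab
  have hsq4pos : 0 < (2*a4)^2 := sq_pos_of_ne_zero (show (2*a4) ≠ 0 by omega)
  have hoe : Odd e := by
    apply odd_of_odd_sq
    rw [← he]
    obtain ⟨bb, hbb⟩ := hob
    exact ⟨8*a4^2 + 2*bb^2 + 2*bb, by rw [ha4, hbb]; ring⟩
  have hof : Odd f := by
    apply odd_of_odd_sq
    rw [← hf]
    obtain ⟨bb, hbb⟩ := hob
    exact ⟨32*a4^2 + 2*bb^2 + 2*bb, by rw [ha4, hbb]; ring⟩
  have cef : IsCoprime e f := by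
    apply int_coprime_of_forall_dvd; intro z hze hzf
    have hz3a : z ∣ 3*a^2 := by
      have hh : 3*a^2 = f^2 - e^2 := by rw [← he, ← hf]; ring
      rw [hh]; exact dvd_sub (dvd_pow hzf two_ne_zero) (dvd_pow hze two_ne_zero)
    by_cases hz3 : (3:ℤ) ∣ z
    · exfalso
      have h3e2 : (3:ℤ) ∣ a^2 + b^2 := by
        rw [he]; exact dvd_pow (hz3.trans hze) two_ne_zero
      obtain ⟨h3a, h3b⟩ := int_three_dvd_sq_add_sq h3e2
      exact hunit3 (hab.isUnit_of_dvd' h3a h3b)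
    · have hza : z ∣ a^2 := (isCoprime_three_of_not_dvd hz3).dvd_of_dvd_mul_left hz3a
      have hzb : z ∣ b^2 := by
        have hh : b^2 = e^2 - a^2 := by rw [← he]; ring
        rw [hh]; exact dvd_sub (dvd_pow hze two_ne_zero) hza
      exact habsq.isUnit_of_dvd' hza hzb
  -- u', v'
  obtain ⟨u', hu'⟩ := hof.sub_odd hoe
  obtain ⟨v', hv'⟩ := hof.add_odd hoe
  have hu'pos : 0 < u' := by linarith only [hu', hfe]
  have hv'pos : 0 < v' := by linarith only [hv', hepos, hfpos]
  have h3a2 : f^2 - e^2 = 3*a^2 := by rw [← he, ← hf]; ring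
  have hu'v' : u' * v' = 3*(2*a4)^2 := by
    have hh : (u'+u')*(v'+v') = 3*a^2 := by rw [← hu', ← hv']; linear_combination h3a2
    have hh2 : 4*(u'*v') = 3*a^2 := by linear_combination hh
    have ha2 : a^2 = 16*a4^2 := by rw [ha4]; ring
    linarith only [hh2, ha2]
  have he_uv : e = v' - u' := by linarith only [hu', hv']
  have hf_uv : f = u' + v' := by linarith only [hu', hv']
  have cu'v' : IsCoprime u' v' := by
    apply int_coprime_of_forall_dvd; intro z hzu hzv
    have h1' : z ∣ e := by rw [he_uv]; exact dvd_sub hzv hzu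
    have h2' : z ∣ f := by rw [hf_uv]; exact dvd_add hzu hzv
    exact cef.isUnit_of_dvd' h1' h2'
  -- get s, t with b^2 = (t^2-s^2)(t^2-9s^2) and 3s^2+t^2 = f
  obtain ⟨s, t, hspos, htpos, hst, hof_st, hbst⟩ :
      ∃ s t : ℤ, 0 < s ∧ 0 < t ∧ IsCoprime s t ∧ 3*s^2 + t^2 = f ∧
        b^2 = (t^2 - s^2) * (t^2 - 9*s^2) := by
    have h3uv : (3:ℤ) ∣ u' * v' := ⟨(2*a4)^2, hu'v'⟩
    rcases (Int.prime_three).dvd_mul.1 h3uv with h3u | h3v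
    · obtain ⟨u1, hu1⟩ := h3u
      have hu1v : u1 * v' = (2*a4)^2 := by
        have hh : 3*(u1*v') = 3*((2*a4)^2) := by rw [← mul_assoc, ← hu1]; exact hu'v'
        linarith only [hh]
      have hu1pos : 0 < u1 := by
        rcases lt_trichotomy u1 0 with h | h | h
        · exfalso
          have hle : u1 * v' ≤ 0 := mul_nonpos_iff.2 (Or.inr ⟨le_of_lt h, le_of_lt hv'pos⟩)
          linarith only [hle, hsq4pos, hu1v]
        · exfalso
          have h0 : u1 * v' = 0 := by rw [h]; ring
          linarith only [h0, hsq4pos, hu1v]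
        · exact h
      have cu1v : IsCoprime u1 v' := cu'v'.of_isCoprime_of_dvd_left ⟨3, by rw [hu1]; ring⟩
      obtain ⟨s, hspos, hs⟩ := pos_sq_of_coprime cu1v hu1v hu1pos
      obtain ⟨t, htpos, ht⟩ := pos_sq_of_coprime cu1v.symm (show v' * u1 = (2*a4)^2 by linear_combination hu1v) hv'pos
      refine ⟨s, t, hspos, htpos, ?_, by rw [← hs, ← ht]; linarith only [hf_uv, hu1], ?_⟩
      · exact (IsCoprime.pow_left_iff two_pos).1 ((IsCoprime.pow_right_iff two_pos).1
          (by rwa [hs, ht] at cu1v))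
      · have he2 : e = t^2 - 3*s^2 := by rw [← hs, ← ht]; linarith only [he_uv, hu1]
        have hb2 : b^2 = e^2 - a^2 := by rw [← he]; ring
        have hA2 : a^2 = 4*(s^2*t^2) := by
          linear_combination (a + 4*a4) * ha4 - 4*hu1v + 4*v'*hs + 4*s^2*ht
        rw [hb2, he2, hA2]; ring
    · obtain ⟨v1, hv1⟩ := h3v
      have hv1u : v1 * u' = (2*a4)^2 := by
        have hh : 3*(v1*u') = 3*((2*a4)^2) := by
          rw [show 3*(v1*u') = u'*(3*v1) by ring, ← hv1]; exact hu'v'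
        linarith only [hh]
      have hv1pos : 0 < v1 := by
        rcases lt_trichotomy v1 0 with h | h | h
        · exfalso
          have hle : v1 * u' ≤ 0 := mul_nonpos_iff.2 (Or.inr ⟨le_of_lt h, le_of_lt hu'pos⟩)
          linarith only [hle, hsq4pos, hv1u]
        · exfalso
          have h0 : v1 * u' = 0 := by rw [h]; ring
          linarith only [h0, hsq4pos, hv1u]
        · exact h
      have cv1u : IsCoprime v1 u' := cu'v'.symm.of_isCoprime_of_dvd_left ⟨3, by rw [hv1]; ring⟩
      obtain ⟨s, hspos, hs⟩ := pos_sq_of_coprime cv1u hv1u hv1pos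
      obtain ⟨t, htpos, ht⟩ := pos_sq_of_coprime cv1u.symm (show u' * v1 = (2*a4)^2 by linear_combination hv1u) hu'pos
      refine ⟨s, t, hspos, htpos, ?_, by rw [← hs, ← ht]; linarith only [hf_uv, hv1], ?_⟩
      · exact (IsCoprime.pow_left_iff two_pos).1 ((IsCoprime.pow_right_iff two_pos).1
          (by rwa [hs, ht] at cv1u))
      · have he2 : e = 3*s^2 - t^2 := by rw [← hs, ← ht]; linarith only [he_uv, hv1]
        have hb2 : b^2 = e^2 - a^2 := by rw [← he]; ring
        have hA2 : a^2 = 4*(s^2*t^2) := by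
          linear_combination (a + 4*a4) * ha4 - 4*hv1u + 4*u'*hs + 4*s^2*ht
        rw [hb2, he2, hA2]; ring
  -- parity of s+t
  have host : Odd (s + t) := by
    have hofst : Odd (3*s^2 + t^2) := by rw [hof_st]; exact hof
    rcases Int.even_or_odd s with hs' | hs' <;> rcases Int.even_or_odd t with ht' | ht'
    · exfalso
      obtain ⟨si, hsi⟩ := hs'; obtain ⟨ti, hti⟩ := ht'
      have hev : Even (3*s^2 + t^2) := ⟨6*si^2 + 2*ti^2, by rw [hsi, hti]; ring⟩
      rw [Int.even_iff] at hev; rw [Int.odd_iff] at hofst; omega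
    · obtain ⟨si, hsi⟩ := hs'; obtain ⟨ti, hti⟩ := ht'
      exact ⟨si + ti, by omega⟩
    · obtain ⟨si, hsi⟩ := hs'; obtain ⟨ti, hti⟩ := ht'
      exact ⟨si + ti, by omega⟩
    · exfalso
      obtain ⟨si, hsi⟩ := hs'; obtain ⟨ti, hti⟩ := ht'
      have hev : Even (3*s^2 + t^2) := ⟨6*si^2 + 6*si + 2*ti^2 + 2*ti + 2, by rw [hsi, hti]; ring⟩
      rw [Int.even_iff] at hev; rw [Int.odd_iff] at hofst; omega
  have hbne : b ≠ 0 := by omega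
  -- position: t < s or 3s < t
  have hcase : t < s ∨ 3*s < t := by
    by_contra hcon
    push_neg at hcon
    obtain ⟨h1c, h2c⟩ := hcon
    have hle1 : (0:ℤ) ≤ t^2 - s^2 := by
      have hh := pow_le_pow_left₀ (le_of_lt hspos) h1c 2
      linarith only [hh]
    have hle2 : t^2 - 9*s^2 ≤ 0 := by
      have hh := pow_le_pow_left₀ (le_of_lt htpos) h2c 2
      nlinarith only [hh]
    have hb2pos : 0 < b^2 := pow_pos hbpos 2
    have hnn := mul_nonneg hle1 (neg_nonneg.mpr hle2)
    nlinarith only [hnn, hb2pos, hbst]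
  -- bound helpers
  have hx2ltx4 : x2 < x4 := by
    have hh : x2^2 < x4^2 := by linarith only [h1, h3, hD]
    by_contra hcc
    push_neg at hcc
    have := pow_le_pow_left₀ h4n hcc 2
    linarith only [this, hh]
  have hx3ltx4 : x3 < x4 := by
    have hh : x3^2 < x4^2 := by linarith only [h2, h3, hD]
    by_contra hcc
    push_neg at hcc
    have := pow_le_pow_left₀ h4n hcc 2
    linarith only [this, hh]
  have hx23le : x2*x3 ≤ x4*x4 :=
    mul_le_mul (le_of_lt hx2ltx4) (le_of_lt hx3ltx4) (le_of_lt hx3pos) (le_of_lt hx4pos)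
  have hfsq : f^2 ≤ 2*(x4*x4) := by
    linarith only [hf, hx23ab, hx23le, sq_nonneg b]
  have hx4ge5 : 5 ≤ x4 := by
    have h1sq : 1 ≤ x1^2 := by nlinarith only [hx1pos]
    have h25 : 25 ≤ x4^2 := by linarith only [h3, hD8', h1sq]
    by_contra hcc
    push_neg at hcc
    have hle4 : x4 ≤ 4 := by omega
    have := pow_le_pow_left₀ h4n hle4 2
    nlinarith only [this, h25]
  have h1s : s ≤ s^2 := by linarith only [sq_nonneg (s-1), hspos]
  have h1t : t ≤ t^2 := by linarith only [sq_nonneg (t-1), htpos]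
  -- the finishing move producing a smaller AP
  have finish_ap : ∀ S T b' : ℤ, 0 < S → 3*S < T → IsCoprime S T → Odd (S+T) →
      ¬ (3:ℤ) ∣ T → b' ≠ 0 → b'^2 = (T^2 - S^2) * (T^2 - 9*S^2) → T + 3*S ≤ f → False := by
    intro S T b' hSpos hT3 hcoST hoddST h3T hbne' heqb hTf
    obtain ⟨γ, α, β, δ, hγpos, hαpos, hβpos, hδpos, hγ2, hα2, hβ2, hδ2⟩ :=
      stage2 b' S T hSpos hT3 hcoST hoddST h3T hbne' heqb
    have hδf : δ^2 ≤ f := by omega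
    have hδx4 : δ < x4 := by
      by_contra hcc
      push_neg at hcc
      have hA : x4^2 ≤ δ^2 := pow_le_pow_left₀ (by omega) hcc 2
      have hA2 : x4^2*x4^2 ≤ δ^2*δ^2 := mul_self_le_mul_self (sq_nonneg x4) hA
      have hB : δ^2*δ^2 ≤ f*f := mul_self_le_mul_self (sq_nonneg δ) hδf
      have h25 : 25 ≤ x4^2 := by linarith only [sq_nonneg (x4-5), hx4ge5]
      nlinarith only [hA2, hB, hfsq, h25, sq_nonneg x4]
    have hlt : δ.natAbs < x4.natAbs := by omega
    exact IH δ.natAbs (by omega) γ α β δ (2*S) (le_of_lt hγpos) (le_of_lt hαpos)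
      (le_of_lt hβpos) (le_of_lt hδpos) (by omega)
      (by omega) (by omega) (by omega) le_rfl
  by_cases h3t : (3:ℤ) ∣ t
  · obtain ⟨t1, ht1⟩ := h3t
    have h3b : (3:ℤ) ∣ b := by
      apply Int.prime_three.dvd_of_dvd_pow (n := 2)
      exact ⟨3*((9*t1^2 - s^2)*(t1^2 - s^2)), by rw [hbst, ht1]; ring⟩
    obtain ⟨b1, hb1⟩ := h3b
    have hb1sq : b1^2 = (s^2 - t1^2) * (s^2 - 9*t1^2) := by
      have h9 : 9*b1^2 = 9*((s^2 - t1^2) * (s^2 - 9*t1^2)) := by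
        have hh := hbst
        rw [hb1, ht1] at hh
        linear_combination hh
      linarith only [h9]
    have ht1pos : 0 < t1 := by omega
    have hcot1s : IsCoprime t1 s := (hst.of_isCoprime_of_dvd_right ⟨3, by omega⟩).symm
    have h3s : ¬ (3:ℤ) ∣ s := by
      intro h3s
      exact hunit3 (hst.isUnit_of_dvd' h3s ⟨t1, by omega⟩)
    have hodst1 : Odd (t1 + s) := by
      rw [Int.odd_iff] at host ⊢; omega
    have hb1ne : b1 ≠ 0 := by
      intro h0; rw [h0] at hb1; omega
    rcases hcase with hc | hc
    · -- t < s : new smaller AP with (S,T) = (t1, s)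
      refine finish_ap t1 s b1 ht1pos (by omega) hcot1s hodst1 h3s hb1ne hb1sq ?_
      linarith only [hof_st, h1s, h1t, ht1, sq_nonneg s]
    · -- 3s < t : direct contradiction
      exact stage2' b1 t1 s ht1pos hspos (by omega) hcot1s hodst1 h3s hb1ne hb1sq
  · rcases hcase with hc | hc
    · exact stage2' b s t hspos htpos hc hst host h3t hbne hbst
    · refine finish_ap s t b hspos hc hst host h3t hbne hbst ?_
      linarith only [hof_st, h1s, h1t]


lemma sq_not_fourAP (a d : ℤ) (hd : d ≠ 0) (h0 : IsSquare a) (h1 : IsSquare (a+d))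
    (h2 : IsSquare (a+2*d)) (h3 : IsSquare (a+3*d)) : False := by
  obtain ⟨w0, hw0⟩ := h0
  obtain ⟨w1, hw1⟩ := h1
  obtain ⟨w2, hw2⟩ := h2
  obtain ⟨w3, hw3⟩ := h3
  have e0 : |w0|^2 = a := by rw [sq_abs, pow_two, ← hw0]
  have e1 : |w1|^2 = a + d := by rw [sq_abs, pow_two, ← hw1]
  have e2 : |w2|^2 = a + 2*d := by rw [sq_abs, pow_two, ← hw2]
  have e3 : |w3|^2 = a + 3*d := by rw [sq_abs, pow_two, ← hw3]
  rcases lt_or_gt_of_ne hd with hneg | hpos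
  · exact no4 (|w0|).natAbs (|w3|) (|w2|) (|w1|) (|w0|) (-d) (abs_nonneg _) (abs_nonneg _)
      (abs_nonneg _) (abs_nonneg _) (by omega) (by rw [e2, e3]; ring) (by rw [e1, e3]; ring)
      (by rw [e0, e3]; ring) le_rfl
  · exact no4 (|w3|).natAbs (|w0|) (|w1|) (|w2|) (|w3|) d (abs_nonneg _) (abs_nonneg _)
      (abs_nonneg _) (abs_nonneg _) hpos (by rw [e0, e1]) (by rw [e0, e2]) (by rw [e0, e3]) le_rfl

open Filter in
lemma growth (B c : ℕ) : ∃ r : ℕ, B * (r+2)^c < 2^(r/2) := by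
  have hlo := isLittleO_pow_const_const_pow_of_one_lt (R := ℝ) c (by norm_num : (1:ℝ) < 2)
  set C : ℕ := (B+1) * 4^c with hC
  have hε : (0:ℝ) < 1/(C+1) := by positivity
  have hev := hlo.def hε
  rw [eventually_atTop] at hev
  obtain ⟨M, hM⟩ := hev
  set ρ : ℕ := max M 1 with hρ
  have hρ1 : 1 ≤ ρ := le_max_right _ _
  have hspec := hM ρ (le_max_left _ _)
  have hnorm : ((ρ:ℝ))^c ≤ (1/(C+1)) * 2^ρ := by
    have h1 : ‖((ρ:ℝ))^c‖ = ((ρ:ℝ))^c := by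
      rw [Real.norm_eq_abs, abs_of_nonneg (by positivity)]
    have h2 : ‖(2:ℝ)^ρ‖ = (2:ℝ)^ρ := by
      rw [Real.norm_eq_abs, abs_of_nonneg (by positivity)]
    calc ((ρ:ℝ))^c = ‖((ρ:ℝ))^c‖ := h1.symm
      _ ≤ (1/(C+1)) * ‖(2:ℝ)^ρ‖ := by simpa using hspec
      _ = (1/(C+1)) * 2^ρ := by rw [h2]
  have hCρ : (C:ℝ) * (ρ:ℝ)^c < 2^ρ := by
    have h2pos : (0:ℝ) < 2^ρ := by positivity
    have : (C:ℝ) * ((ρ:ℝ))^c ≤ (C:ℝ) * ((1/(C+1)) * 2^ρ) :=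
      mul_le_mul_of_nonneg_left hnorm (by positivity)
    have hlt : (C:ℝ) * ((1/(C+1)) * 2^ρ) < 2^ρ := by
      rw [← mul_assoc]
      have : (C:ℝ) * (1/(C+1)) < 1 := by
        rw [mul_one_div, div_lt_one (by positivity)]
        norm_num
      nlinarith [h2pos, this]
    linarith
  have hnat : C * ρ^c < 2^ρ := by
    have := hCρ
    push_cast at this
    exact_mod_cast this
  refine ⟨2*ρ, ?_⟩
  have hdiv : (2*ρ)/2 = ρ := by omega
  rw [hdiv]
  have hble : B * (2*ρ+2)^c ≤ C * ρ^c := by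
    have h1 : 2*ρ+2 ≤ 4*ρ := by omega
    have h2 : (2*ρ+2)^c ≤ (4*ρ)^c := Nat.pow_le_pow_left h1 c
    calc B * (2*ρ+2)^c ≤ B * (4*ρ)^c := Nat.mul_le_mul_left _ h2
      _ = B * (4^c * ρ^c) := by rw [mul_pow]
      _ ≤ (B+1) * 4^c * ρ^c := by ring_nf; nlinarith [Nat.zero_le (4^c * ρ^c)]
      _ = C * ρ^c := by rw [hC]
  omega


set_option maxHeartbeats 1000000 in
theorem squares_not_polynomially_many_projected_convex_pieces :
    ¬ ∃ (n c : ℕ), ∀ r : ℕ, ∃ m : ℕ, m ≤ (r + 2) ^ c ∧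
      ∃ P : Fin m → Set (ℝ × (Fin n → ℝ)),
        (∀ i, Convex ℝ (P i)) ∧
        {x : ℤ | ∃ y : Fin n → ℤ, ∃ i,
            (((x : ℝ), fun t => (y t : ℝ)) : ℝ × (Fin n → ℝ)) ∈ P i} =
          {x : ℤ | 0 ≤ x ∧ x < 2 ^ r ∧ IsSquare x} := by
  classical
  rintro ⟨n, c, h⟩
  obtain ⟨r, hr⟩ := growth (3^(n+1)) c
  obtain ⟨m, hm, P, hconv, hset⟩ := h r
  have hiff : ∀ x : ℤ,
      (∃ y : Fin n → ℤ, ∃ i, (((x : ℝ), fun t => (y t : ℝ)) : ℝ × (Fin n → ℝ)) ∈ P i) ↔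
      (0 ≤ x ∧ x < 2 ^ r ∧ IsSquare x) := by
    intro x
    have := Set.ext_iff.1 hset x
    simpa using this
  -- squares below 2^r are in the projected set
  have hsq_mem : ∀ k : ℕ, k < 2^(r/2) →
      (∃ y : Fin n → ℤ, ∃ i, ((((k:ℤ)^2 : ℤ) : ℝ), fun t => (y t : ℝ)) ∈ P i) := by
    intro k hk
    rw [hiff]
    refine ⟨by positivity, ?_, ⟨(k:ℤ), by ring⟩⟩
    have h1 : k^2 < (2^(r/2))^2 := Nat.pow_lt_pow_left hk two_ne_zero
    have h2 : (2^(r/2))^2 ≤ 2^r := by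
      rw [← pow_mul]
      exact Nat.pow_le_pow_right (by norm_num) (by omega)
    have h3 : k^2 < 2^r := lt_of_lt_of_le h1 h2
    exact_mod_cast Int.ofNat_lt.2 h3
  -- m is positive
  have hm0 : 0 < m := by
    have h0 : ∃ y : Fin n → ℤ, ∃ i, ((((0:ℤ)) : ℝ), fun t => (y t : ℝ)) ∈ P i := by
      rw [hiff]
      exact ⟨le_refl 0, by positivity, ⟨0, by ring⟩⟩
    obtain ⟨y, i, _⟩ := h0
    exact i.pos
  -- pigeonhole setup
  have hcard : Fintype.card (Fin m × (ZMod 3 × (Fin n → ZMod 3))) = m * 3^(n+1) := by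
    rw [Fintype.card_prod, Fintype.card_prod, Fintype.card_fun, Fintype.card_fin,
        ZMod.card, Fintype.card_fin]
    ring
  set F : ℤ → Fin m × (ZMod 3 × (Fin n → ZMod 3)) := fun x =>
    if hx : ∃ y : Fin n → ℤ, ∃ i, (((x : ℝ), fun t => (y t : ℝ)) : ℝ × (Fin n → ℝ)) ∈ P i then
      ⟨hx.choose_spec.choose, ((x : ZMod 3), fun t => ((hx.choose t : ℤ) : ZMod 3))⟩
    else ⟨⟨0, hm0⟩, 0, fun _ => 0⟩ with hF
  have hTdef : ∃ T : Finset ℤ, T = (Finset.range (2^(r/2))).image (fun k : ℕ => ((k:ℤ))^2) :=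
    ⟨_, rfl⟩
  obtain ⟨T, hT⟩ := hTdef
  have hinj : Function.Injective (fun k : ℕ => ((k:ℤ))^2) := by
    intro p q hpq
    simp only at hpq
    have h2 : (p^2 : ℕ) = (q^2 : ℕ) := by exact_mod_cast hpq
    exact Nat.pow_left_injective (by norm_num) h2
  have hTcard : T.card = 2^(r/2) := by
    rw [hT, Finset.card_image_of_injective _ hinj, Finset.card_range]
  have hcardlt : (Finset.univ : Finset (Fin m × (ZMod 3 × (Fin n → ZMod 3)))).card < T.card := by
    rw [Finset.card_univ, hcard, hTcard]
    calc m * 3^(n+1) ≤ (r+2)^c * 3^(n+1) := Nat.mul_le_mul_right _ hm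
      _ = 3^(n+1) * (r+2)^c := by ring
      _ < 2^(r/2) := hr
  obtain ⟨x, hxT, x', hx'T, hne, hFeq⟩ :=
    Finset.exists_ne_map_eq_of_card_lt_of_maps_to hcardlt (fun a _ => Finset.mem_univ (F a))
  have hxL : ∃ y : Fin n → ℤ, ∃ i, (((x : ℝ), fun t => (y t : ℝ)) : ℝ × (Fin n → ℝ)) ∈ P i := by
    rw [hT] at hxT
    obtain ⟨k, hk, rfl⟩ := Finset.mem_image.1 hxT
    exact hsq_mem k (Finset.mem_range.1 hk)
  have hx'L : ∃ y : Fin n → ℤ, ∃ i, (((x' : ℝ), fun t => (y t : ℝ)) : ℝ × (Fin n → ℝ)) ∈ P i := by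
    rw [hT] at hx'T
    obtain ⟨k, hk, rfl⟩ := Finset.mem_image.1 hx'T
    exact hsq_mem k (Finset.mem_range.1 hk)
  rw [hF] at hFeq
  simp only [dif_pos hxL, dif_pos hx'L, Prod.mk.injEq] at hFeq
  obtain ⟨hieq, hxmod, hymod⟩ := hFeq
  -- notation for witnesses
  set y1 : Fin n → ℤ := hxL.choose with hy1
  set i1 : Fin m := hxL.choose_spec.choose with hi1
  have hp1 : (((x : ℝ), fun t => (y1 t : ℝ)) : ℝ × (Fin n → ℝ)) ∈ P i1 :=
    hxL.choose_spec.choose_spec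
  set y2 : Fin n → ℤ := hx'L.choose with hy2
  set i2 : Fin m := hx'L.choose_spec.choose with hi2
  have hp2 : (((x' : ℝ), fun t => (y2 t : ℝ)) : ℝ × (Fin n → ℝ)) ∈ P i2 :=
    hx'L.choose_spec.choose_spec
  have hp2' : (((x' : ℝ), fun t => (y2 t : ℝ)) : ℝ × (Fin n → ℝ)) ∈ P i1 := by
    rw [hieq]; exact hp2
  -- congruences
  have hd3 : (3:ℤ) ∣ x' - x := by
    rw [ZMod.intCast_eq_intCast_iff] at hxmod
    exact Int.ModEq.dvd hxmod
  obtain ⟨δ, hδ⟩ := hd3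
  have hδne : δ ≠ 0 := by
    intro h0; rw [h0] at hδ; apply hne; omega
  have hyd : ∀ t, ∃ e : ℤ, y2 t - y1 t = 3 * e := by
    intro t
    have := congrFun hymod t
    rw [ZMod.intCast_eq_intCast_iff] at this
    exact (Int.ModEq.dvd this).imp (fun e he => he)
  choose η hη using hyd
  -- the two intermediate points
  have hx'val : (x' : ℤ) = x + 3*δ := by omega
  have hmid : ∀ (j : ℤ), j = 1 ∨ j = 2 →
      (∃ y : Fin n → ℤ, ∃ i, ((((x + j*δ : ℤ)) : ℝ), fun t => (y t : ℝ)) ∈ P i) := by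
    intro j hj
    refine ⟨fun t => y1 t + j * η t, i1, ?_⟩
    have hcoef : (0:ℝ) ≤ 1 - (j:ℝ)/3 ∧ (0:ℝ) ≤ (j:ℝ)/3 ∧ (1 - (j:ℝ)/3) + (j:ℝ)/3 = 1 := by
      rcases hj with rfl | rfl <;> norm_num
    have hmem := hconv i1 hp1 hp2' hcoef.1 hcoef.2.1 hcoef.2.2
    convert hmem using 1
    have hj3 : ((x':ℤ):ℝ) = (x:ℝ) + 3*(δ:ℝ) := by exact_mod_cast congrArg (Int.cast : ℤ → ℝ) hx'val
    apply Prod.ext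
    · simp only [Prod.fst_add, Prod.smul_fst, smul_eq_mul]
      push_cast
      rw [hj3]
      ring
    · funext t
      simp only [Prod.snd_add, Prod.smul_snd, Pi.add_apply, Pi.smul_apply, smul_eq_mul]
      have ht := hη t
      have htc : ((y2 t : ℤ):ℝ) = (y1 t : ℝ) + 3*(η t : ℝ) := by
        have : (y2 t : ℤ) = y1 t + 3 * η t := by omega
        exact_mod_cast congrArg (Int.cast : ℤ → ℝ) this
      push_cast
      rw [htc]
      ring
  -- extract squares
  have hsq : ∀ z : ℤ, (∃ y : Fin n → ℤ, ∃ i, (((z : ℝ), fun t => (y t : ℝ)) : ℝ × (Fin n → ℝ)) ∈ P i) → IsSquare z := by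
    intro z hz
    exact ((hiff z).1 hz).2.2
  have hs0 : IsSquare x := hsq x hxL
  have hs1 : IsSquare (x + δ) := by
    have := hsq _ (hmid 1 (Or.inl rfl))
    simpa using this
  have hs2 : IsSquare (x + 2*δ) := hsq _ (hmid 2 (Or.inr rfl))
  have hs3 : IsSquare (x + 3*δ) := by rw [← hx'val]; exact hsq x' hx'L
  exact sq_not_fourAP x δ hδne hs0 hs1 hs2 hs3
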